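/- Under assumptions (I)–(III), the (m+sd)×(m+sd) matrix A₀·diag{0_{m×m}, −I_{sd}} equals diag{0_{m×m}, −B}, where A₀ := diag{a₀, B} and B := (I_d ⊗ a₀²²)·H⁻¹, and this matrix is symmetric negative semidefinite. -/

import Mathlib

open Matrix

lemma fromBlocks_zero_posSemidef {α β : Type*} [Fintype α] [Fintype β]
    [DecidableEq α] [DecidableEq β]
    {B : Matrix β β ℝ} (hB : B.PosSemidef) :
    (fromBlocks (0 : Matrix α α ℝ) 0 0 B).PosSemidef := by
  rw [Matrix.posSemidef_iff_dotProduct_mulVec] at hB ⊢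
  obtain ⟨hBh, hBq⟩ := hB
  constructor
  · rw [Matrix.IsHermitian, Matrix.conjTranspose_eq_transpose_of_trivial,
      Matrix.fromBlocks_transpose]
    rw [Matrix.IsHermitian, Matrix.conjTranspose_eq_transpose_of_trivial] at hBh
    simp [hBh]
  · intro x
    have hx : x = Sum.elim (x ∘ Sum.inl) (x ∘ Sum.inr) := (Sum.elim_comp_inl_inr x).symm
    rw [hx, Matrix.fromBlocks_mulVec]
    simp only [Matrix.zero_mulVec, zero_add, add_zero]
    have hstar : star (Sum.elim (x ∘ Sum.inl) (x ∘ Sum.inr)) =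
        Sum.elim (star (x ∘ Sum.inl)) (star (x ∘ Sum.inr)) := rfl
    rw [hstar, sumElim_dotProduct_sumElim]
    have := hBq (x ∘ Sum.inr)
    simp only [dotProduct_zero, Sum.elim_comp_inr]
    linarith

/-- Theorem 4.1(c): under assumptions (I)–(III),
`A₀ * diag{0, -I_sd} = diag{0, -B}`, and this matrix is symmetric negative semidefinite. -/
theorem stmt_2 (p s d : ℕ) (hp : 1 ≤ p) (hs : 1 ≤ s) (hd : 1 ≤ d)
    (a : Fin d → Matrix (Fin p ⊕ Fin s) (Fin p ⊕ Fin s) ℝ)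
    (a11 : Matrix (Fin p) (Fin p) ℝ) (a12 : Matrix (Fin p) (Fin s) ℝ)
    (a21 : Matrix (Fin s) (Fin p) ℝ) (a22 : Matrix (Fin s) (Fin s) ℝ)
    (D21 : Fin d → Fin d → Matrix (Fin s) (Fin p) ℝ)
    (D22 : Fin d → Fin d → Matrix (Fin s) (Fin s) ℝ)
    (a₀ : Matrix (Fin p ⊕ Fin s) (Fin p ⊕ Fin s) ℝ)
    (ha₀ : a₀ = fromBlocks a11 a12 a21 a22)
    (D : Fin d → Fin d → Matrix (Fin p ⊕ Fin s) (Fin p ⊕ Fin s) ℝ)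
    (hD : ∀ j k, D j k = fromBlocks 0 0 (D21 j k) (D22 j k))
    (hpd : a₀.PosDef)
    -- (I): a₀ ⬝ a_j is symmetric
    (hI : ∀ j, (a₀ * a j).IsSymm)
    -- (II): the md × md block matrix with (j,k) block a₀ ⬝ D_{jk} is symmetric PSD
    (hII : (Matrix.of fun (x y : Fin d × (Fin p ⊕ Fin s)) =>
      (a₀ * D x.1 y.1) x.2 y.2).PosSemidef)
    -- (III): the sd × sd block matrix H with (j,k) block D_{jk}²² is invertible
    (H : Matrix (Fin d × Fin s) (Fin d × Fin s) ℝ)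
    (hH : H = Matrix.of fun (x y : Fin d × Fin s) => D22 x.1 y.1 x.2 y.2)
    (hIII : IsUnit H.det)
    (B : Matrix (Fin d × Fin s) (Fin d × Fin s) ℝ)
    (hB : B = (kroneckerMap (· * ·) (1 : Matrix (Fin d) (Fin d) ℝ) a22) * H⁻¹)
    (A₀ : Matrix ((Fin p ⊕ Fin s) ⊕ (Fin d × Fin s)) ((Fin p ⊕ Fin s) ⊕ (Fin d × Fin s)) ℝ)
    (hA₀ : A₀ = fromBlocks a₀ 0 0 B) :
    A₀ * fromBlocks 0 0 0 (-1) = fromBlocks 0 0 0 (-B) ∧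
      (fromBlocks (0 : Matrix (Fin p ⊕ Fin s) (Fin p ⊕ Fin s) ℝ) 0 0 (-B)).IsSymm ∧
      (-(fromBlocks (0 : Matrix (Fin p ⊕ Fin s) (Fin p ⊕ Fin s) ℝ) 0 0 (-B))).PosSemidef := by
  -- a22 is symmetric
  have ha₀sym : a₀ᵀ = a₀ := by
    have := hpd.isHermitian
    rwa [Matrix.IsHermitian, Matrix.conjTranspose_eq_transpose_of_trivial] at this
  have ha22 : a22ᵀ = a22 := by
    rw [ha₀, fromBlocks_transpose] at ha₀sym
    have := congrArg Matrix.toBlocks₂₂ ha₀sym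
    simpa using this
  -- G : the PSD matrix with blocks a22 * D22
  set G : Matrix (Fin d × Fin s) (Fin d × Fin s) ℝ :=
    Matrix.of fun x y => (a22 * D22 x.1 y.1) x.2 y.2 with hG
  have hGsub : (Matrix.of fun (x y : Fin d × (Fin p ⊕ Fin s)) =>
      (a₀ * D x.1 y.1) x.2 y.2).submatrix
        (fun x : Fin d × Fin s => (x.1, Sum.inr x.2))
        (fun x : Fin d × Fin s => (x.1, Sum.inr x.2)) = G := by
    ext ⟨j, i⟩ ⟨k, l⟩
    simp [hG, ha₀, hD, Matrix.fromBlocks_multiply]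
  have hGpsd : G.PosSemidef := hGsub ▸ hII.submatrix _
  have hGsym : Gᵀ = G := by
    have := hGpsd.isHermitian
    rwa [Matrix.IsHermitian, Matrix.conjTranspose_eq_transpose_of_trivial] at this
  -- G = (1 ⊗ a22) * H
  have hGH : G = (kroneckerMap (· * ·) (1 : Matrix (Fin d) (Fin d) ℝ) a22) * H := by
    ext ⟨j, i⟩ ⟨k, l⟩
    simp only [hG, hH, Matrix.mul_apply, Matrix.of_apply, kroneckerMap_apply,
      Fintype.sum_prod_type, Matrix.one_apply]
    rw [Finset.sum_comm]
    simp [Finset.sum_ite_eq, mul_assoc, ← Finset.mul_sum]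
  have hHinv : H⁻¹ * H = 1 := Matrix.nonsing_inv_mul H hIII
  have hHTinv : (Hᵀ)⁻¹ * Hᵀ = 1 := by
    rw [← Matrix.transpose_nonsing_inv, ← Matrix.transpose_mul]
    rw [Matrix.mul_nonsing_inv H hIII, Matrix.transpose_one]
  -- B = (H⁻¹)ᵀ * G * H⁻¹
  have hBG : B = (H⁻¹)ᵀ * G * H⁻¹ := by
    have h1 : Hᵀ * kroneckerMap (· * ·) (1 : Matrix (Fin d) (Fin d) ℝ) a22 = G := by
      have := congrArg Matrix.transpose hGH
      rw [Matrix.transpose_mul] at this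
      rw [← hGsym]
      convert this.symm using 2
      rw [← Matrix.kroneckerMap_transpose, Matrix.transpose_one, ha22]
    have h2 : kroneckerMap (· * ·) (1 : Matrix (Fin d) (Fin d) ℝ) a22 = (Hᵀ)⁻¹ * G := by
      rw [← h1, ← Matrix.mul_assoc, hHTinv, Matrix.one_mul]
    rw [hB, h2, Matrix.transpose_nonsing_inv]
  have hBpsd : B.PosSemidef := by
    rw [hBG]
    have := hGpsd.mul_mul_conjTranspose_same (H⁻¹)ᵀ
    rwa [Matrix.conjTranspose_eq_transpose_of_trivial, Matrix.transpose_transpose] at this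
  have hBsym : Bᵀ = B := by
    have := hBpsd.isHermitian
    rwa [Matrix.IsHermitian, Matrix.conjTranspose_eq_transpose_of_trivial] at this
  refine ⟨?_, ?_, ?_⟩
  · rw [hA₀, Matrix.fromBlocks_multiply]
    simp
  · rw [Matrix.IsSymm, Matrix.fromBlocks_transpose]
    simp [Matrix.transpose_neg, hBsym]
  · have : -(fromBlocks (0 : Matrix (Fin p ⊕ Fin s) (Fin p ⊕ Fin s) ℝ) 0 0 (-B)) =
        fromBlocks 0 0 0 B := by
      ext i j
      cases i <;> cases j <;> simp [Matrix.fromBlocks]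
    rw [this]
    exact fromBlocks_zero_posSemidef hBpsd
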